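/- Let δ be a locally nilpotent derivation of an integral domain R of characteristic 0, and let f, g ∈ R with f·g ∈ ker δ \ {0}. Then f ∈ ker δ and g ∈ ker δ, i.e., the kernel of a locally nilpotent derivation of a domain is factorially closed. -/
import Mathlib

open Finset in
private lemma iter_leibniz {R : Type*} [CommRing R] (δ : Derivation ℤ R R)
    (f g : R) (n : ℕ) :
    (⇑δ)^[n] (f * g) =
      ∑ i ∈ range (n + 1), (n.choose i : R) * ((⇑δ)^[i] f * (⇑δ)^[n - i] g) := by
  induction n with
  | zero => simp
  | succ n ih =>
    rw [Function.iterate_succ_apply', ih, map_sum]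
    have key : ∀ i ∈ range (n + 1),
        δ ((n.choose i : R) * ((⇑δ)^[i] f * (⇑δ)^[n - i] g)) =
          (n.choose i : R) * ((⇑δ)^[i + 1] f * (⇑δ)^[n - i] g) +
          (n.choose i : R) * ((⇑δ)^[i] f * (⇑δ)^[n - i + 1] g) := by
      intro i _
      have : ((n.choose i : R)) = ((n.choose i : ℤ) : R) := by push_cast; ring
      rw [this, ← zsmul_eq_mul, map_zsmul, Derivation.leibniz, smul_eq_mul, smul_eq_mul,
        Function.iterate_succ_apply' δ i, Function.iterate_succ_apply' δ (n - i),
        zsmul_eq_mul]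
      push_cast
      ring
    rw [Finset.sum_congr rfl key, Finset.sum_add_distrib]
    have hc : ∀ i ∈ range (n + 1),
        ((n + 1).choose (i + 1) : R) * ((⇑δ)^[i + 1] f * (⇑δ)^[n + 1 - (i + 1)] g) =
          (n.choose i : R) * ((⇑δ)^[i + 1] f * (⇑δ)^[n - i] g) +
          (n.choose (i + 1) : R) * ((⇑δ)^[i + 1] f * (⇑δ)^[n - i] g) := by
      intro i _
      rw [Nat.succ_sub_succ, Nat.choose_succ_succ]
      push_cast
      ring
    have hB : (∑ i ∈ range (n + 1), (n.choose i : R) * ((⇑δ)^[i] f * (⇑δ)^[n - i + 1] g))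
        = ∑ i ∈ range (n + 1), (n.choose (i + 1) : R) * ((⇑δ)^[i + 1] f * (⇑δ)^[n - i] g)
          + f * (⇑δ)^[n + 1] g := by
      rw [Finset.sum_range_succ'
        (fun i => (n.choose i : R) * ((⇑δ)^[i] f * (⇑δ)^[n - i + 1] g)) n]
      rw [Finset.sum_range_succ
        (fun i => (n.choose (i + 1) : R) * ((⇑δ)^[i + 1] f * (⇑δ)^[n - i] g)) n]
      have h2 : ∀ i ∈ range n,
          (n.choose (i + 1) : R) * ((⇑δ)^[i + 1] f * (⇑δ)^[n - (i + 1) + 1] g) =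
            (n.choose (i + 1) : R) * ((⇑δ)^[i + 1] f * (⇑δ)^[n - i] g) := by
        intro i hi
        simp only [Finset.mem_range] at hi
        congr 3
        omega
      rw [Finset.sum_congr rfl h2]
      simp [Nat.choose_succ_self]
    rw [hB, Finset.sum_range_succ' _ (n + 1), Finset.sum_congr rfl hc,
      Finset.sum_add_distrib]
    simp only [Nat.choose_zero_right, Nat.cast_one, Function.iterate_zero_apply,
      Nat.sub_zero, one_mul]
    ring

theorem stmt_16 {R : Type*} [CommRing R] [IsDomain R] [CharZero R]
    (δ : Derivation ℤ R R) (hln : ∀ f : R, ∃ k : ℕ, (⇑δ)^[k] f = 0)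
    (f g : R) (hfg0 : f * g ≠ 0) (hker : δ (f * g) = 0) :
    δ f = 0 ∧ δ g = 0 := by
  classical
  have hf0 : f ≠ 0 := fun h => hfg0 (by simp [h])
  have hg0 : g ≠ 0 := fun h => hfg0 (by simp [h])
  have deg : ∀ x : R, x ≠ 0 → ∃ a : ℕ, (⇑δ)^[a] x ≠ 0 ∧ ∀ m, a < m → (⇑δ)^[m] x = 0 := by
    intro x hx
    have hex := hln x
    have hk1 : 1 ≤ Nat.find hex := by
      rcases Nat.eq_zero_or_pos (Nat.find hex) with h | h
      · exact absurd (Nat.find_spec hex) (by simp [h, hx])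
      · exact h
    refine ⟨Nat.find hex - 1, Nat.find_min hex (by omega), fun m hm => ?_⟩
    have hme : m = (m - Nat.find hex) + Nat.find hex := by omega
    rw [hme, Function.iterate_add_apply, Nat.find_spec hex,
      Function.iterate_fixed (map_zero δ)]
  obtain ⟨a, hfa, hfm⟩ := deg f hf0
  obtain ⟨b, hgb, hgm⟩ := deg g hg0
  have hfg : ∀ n : ℕ, 1 ≤ n → (⇑δ)^[n] (f * g) = 0 := by
    intro n hn
    have hne : n = (n - 1) + 1 := by omega
    rw [hne, Function.iterate_succ_apply, hker, Function.iterate_fixed (map_zero δ)]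
  have hab : a + b = 0 := by
    by_contra h
    have h1 : 1 ≤ a + b := by omega
    have hil := iter_leibniz δ f g (a + b)
    rw [hfg _ h1] at hil
    have hsum : (0 : R) = ((a + b).choose a : R) * ((⇑δ)^[a] f * (⇑δ)^[b] g) := by
      rw [hil, Finset.sum_eq_single a]
      · have : a + b - a = b := by omega
        rw [this]
      · intro i hi hia
        simp only [Finset.mem_range] at hi
        rcases lt_or_gt_of_ne hia with h' | h'
        · have : (⇑δ)^[a + b - i] g = 0 := hgm _ (by omega)
          simp [this]
        · have : (⇑δ)^[i] f = 0 := hfm _ h'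
          simp [this]
      · intro h'; exact absurd (Finset.mem_range.mpr (by omega)) h'
    have hch : ((a + b).choose a : R) ≠ 0 := by
      exact_mod_cast Nat.cast_ne_zero.mpr (Nat.choose_pos (by omega : a ≤ a + b)).ne'
    exact (mul_ne_zero hch (mul_ne_zero hfa hgb)) hsum.symm
  constructor
  · simpa using hfm 1 (by omega)
  · simpa using hgm 1 (by omega)
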